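/- For every n ∈ ℕ with n ≥ 1, there exist N = (9n² − 7n)/2, capacities u¹, u² : Fin N → ℕ, interdiction costs c : Fin N → ℕ, and a budget B ∈ ℕ, such that the set of nondominated points (for minimization) of Y = { (Σ_{i : γ(i)=0} u¹(i), Σ_{i : γ(i)=0} u²(i)) : γ : Fin N → {0,1}, Σᵢ c(i)·γ(i) ≤ B } ⊆ ℕ² has cardinality at least 2ⁿ − 1. In particular, BMFNI is intractable even on two-terminal parallel graphs: its number of nondominated points can be exponential in the size of the instance. -/

import Mathlib

open Finset

/-- The set of nondominated points (for minimization) of `Y ⊆ ℕ²`. -/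
def NDmin (Y : Set (ℕ × ℕ)) : Set (ℕ × ℕ) :=
  {y ∈ Y | ¬ ∃ y' ∈ Y, y' ≤ y ∧ y' ≠ y}

lemma one_le_two_pow (k : ℕ) : 1 ≤ 2 ^ k := Nat.one_le_pow _ _ (by norm_num)

lemma two_pow_sum (n : ℕ) : ∑ i ∈ Finset.range n, 2 ^ i = 2 ^ n - 1 := by
  induction n with
  | zero => simp
  | succ k ih =>
    rw [Finset.sum_range_succ, ih, pow_succ]
    have := one_le_two_pow k
    omega

lemma bitsum : ∀ n a : ℕ, a < 2 ^ n →
    ∑ j ∈ Finset.range n, (if a.testBit j then 2 ^ j else 0) = a := by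
  intro n
  induction n with
  | zero => intro a ha; interval_cases a; simp
  | succ k ih =>
    intro a ha
    have hpos : 0 < 2 ^ k := Nat.pow_pos (by norm_num)
    have hmod : a % 2 ^ k < 2 ^ k := Nat.mod_lt _ hpos
    have h1 : ∑ j ∈ Finset.range k, (if a.testBit j then 2 ^ j else 0)
        = a % 2 ^ k := by
      rw [← ih (a % 2 ^ k) hmod]
      apply Finset.sum_congr rfl
      intro j hj
      rw [Nat.testBit_mod_two_pow]
      simp [Finset.mem_range.mp hj]
    rw [Finset.sum_range_succ, h1]
    have hlt : a < 2 * 2 ^ k := by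
      have : (2:ℕ) ^ (k + 1) = 2 ^ k * 2 := pow_succ 2 k
      omega
    have hdiv : a / 2 ^ k ≤ 1 :=
      Nat.le_of_lt_succ ((Nat.div_lt_iff_lt_mul hpos).mpr (by omega))
    have hbit : a.testBit k = decide (a / 2 ^ k % 2 = 1) := Nat.testBit_eq_decide_div_mod_eq
    have heq : a = 2 ^ k * (a / 2 ^ k) + a % 2 ^ k := (Nat.div_add_mod a (2 ^ k)).symm
    rcases Nat.le_one_iff_eq_zero_or_eq_one.mp hdiv with h | h
    · rw [h] at hbit heq
      rw [hbit]
      norm_num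
      omega
    · rw [h] at hbit heq
      rw [hbit]
      norm_num
      omega

lemma split_sum {n N : ℕ} (h : 2 * n ≤ N) (G : ℕ → ℕ) (h0 : ∀ j, 2 * n ≤ j → G j = 0) :
    ∑ j ∈ Finset.range N, G j
      = ∑ j ∈ Finset.range n, G j + ∑ j ∈ Finset.range n, G (n + j) := by
  have h3 : ∑ j ∈ Finset.Ico (2 * n) N, G j = 0 := by
    apply Finset.sum_eq_zero
    intro j hj
    exact h0 j (Finset.mem_Ico.mp hj).1
  have h4 : ∑ j ∈ Finset.Ico n (2 * n), G j = ∑ j ∈ Finset.range n, G (n + j) := by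
    have hx : 2 * n - n = n := by omega
    rw [Finset.sum_Ico_eq_sum_range, hx]
  calc ∑ j ∈ Finset.range N, G j = ∑ j ∈ Finset.Ico 0 N, G j := by
        rw [Finset.range_eq_Ico]
    _ = ∑ j ∈ Finset.Ico 0 (2 * n), G j + ∑ j ∈ Finset.Ico (2 * n) N, G j :=
        (Finset.sum_Ico_consecutive G (by omega) h).symm
    _ = ∑ j ∈ Finset.Ico 0 (2 * n), G j := by rw [h3, add_zero]
    _ = ∑ j ∈ Finset.Ico 0 n, G j + ∑ j ∈ Finset.Ico n (2 * n), G j :=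
        (Finset.sum_Ico_consecutive G (by omega) (by omega)).symm
    _ = ∑ j ∈ Finset.range n, G j + ∑ j ∈ Finset.range n, G (n + j) := by
        rw [← Finset.range_eq_Ico, h4]

theorem stmt8 (n : ℕ) (hn : 1 ≤ n) :
    ∃ (u1 u2 c : Fin ((9 * n ^ 2 - 7 * n) / 2) → ℕ) (B : ℕ),
      2 ^ n - 1 ≤
        (NDmin {y : ℕ × ℕ | ∃ γ : Fin ((9 * n ^ 2 - 7 * n) / 2) → ℕ,
          (∀ i, γ i ≤ 1) ∧ (∑ i, c i * γ i) ≤ B ∧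
          y = (∑ i ∈ Finset.univ.filter (fun i => γ i = 0), u1 i,
               ∑ i ∈ Finset.univ.filter (fun i => γ i = 0), u2 i)}).ncard := by
  set N := (9 * n ^ 2 - 7 * n) / 2 with hN
  rcases eq_or_lt_of_le hn with h1 | hn2
  · -- n = 1
    refine ⟨fun _ => 0, fun _ => 0, fun _ => 0, 0, ?_⟩
    have hY : {y : ℕ × ℕ | ∃ γ : Fin N → ℕ,
          (∀ i, γ i ≤ 1) ∧ (∑ i, (fun _ : Fin N => (0:ℕ)) i * γ i) ≤ 0 ∧
          y = (∑ i ∈ Finset.univ.filter (fun i => γ i = 0), (fun _ : Fin N => (0:ℕ)) i,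
               ∑ i ∈ Finset.univ.filter (fun i => γ i = 0), (fun _ : Fin N => (0:ℕ)) i)}
        = {((0 : ℕ), (0 : ℕ))} := by
      ext y
      simp only [Set.mem_setOf_eq, Set.mem_singleton_iff]
      constructor
      · rintro ⟨γ, -, -, rfl⟩
        simp
      · rintro rfl
        exact ⟨fun _ => 0, fun _ => Nat.zero_le 1, by simp, by simp⟩
    rw [hY]
    have hnd : NDmin {((0:ℕ), (0:ℕ))} = {((0:ℕ), (0:ℕ))} := by
      ext y
      simp only [NDmin, Set.mem_setOf_eq, Set.mem_singleton_iff]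
      constructor
      · rintro ⟨h, -⟩; exact h
      · rintro rfl
        refine ⟨rfl, ?_⟩
        rintro ⟨y', rfl, -, hne⟩
        exact hne rfl
    rw [hnd, Set.ncard_singleton]
    have : n = 1 := h1.symm
    subst this
    norm_num
  -- n ≥ 2
  have hn2' : 2 ≤ n := hn2
  have h2n : 2 * n ≤ N := by
    have key : 11 * n ≤ 9 * n ^ 2 := by nlinarith
    omega
  set F1 : ℕ → ℕ := fun j => if j < n then 2 ^ j else 0 with hF1
  set F2 : ℕ → ℕ := fun j => if n ≤ j ∧ j < 2 * n then 2 ^ (j - n) else 0 with hF2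
  -- pointwise values
  have hF1A : ∀ j, j < n → F1 j = 2 ^ j := by
    intro j hj; simp only [hF1]; rw [if_pos hj]
  have hF1N : ∀ j, ¬ j < n → F1 j = 0 := by
    intro j hj; simp only [hF1]; rw [if_neg hj]
  have hF2S : ∀ j, j < n → F2 j = 0 := by
    intro j hj; simp only [hF2]; rw [if_neg (by omega)]
  have hF2B : ∀ j, j < n → F2 (n + j) = 2 ^ j := by
    intro j hj; simp only [hF2]; rw [if_pos (by omega)]
    have hx : n + j - n = j := by omega
    rw [hx]
  have hF2N : ∀ j, 2 * n ≤ j → F2 j = 0 := by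
    intro j hj; simp only [hF2]; rw [if_neg (by omega)]
  refine ⟨fun i => F1 i.val, fun i => F2 i.val, fun i => F1 i.val + F2 i.val, 2 ^ n - 1, ?_⟩
  set Y : Set (ℕ × ℕ) := {y : ℕ × ℕ | ∃ γ : Fin N → ℕ,
          (∀ i, γ i ≤ 1) ∧ (∑ i, ((fun i : Fin N => F1 i.val + F2 i.val) i) * γ i) ≤ 2 ^ n - 1 ∧
          y = (∑ i ∈ Finset.univ.filter (fun i => γ i = 0), (fun i : Fin N => F1 i.val) i,
               ∑ i ∈ Finset.univ.filter (fun i => γ i = 0), (fun i : Fin N => F2 i.val) i)}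
    with hYdef
  show 2 ^ n - 1 ≤ (NDmin Y).ncard
  -- total cost
  have htotal : ∑ i : Fin N, (F1 i.val + F2 i.val) = 2 * (2 ^ n - 1) := by
    rw [Fin.sum_univ_eq_sum_range (fun j => F1 j + F2 j) N]
    rw [split_sum h2n _ (by
      intro j hj
      rw [hF1N j (by omega), hF2N j hj])]
    have e1 : ∑ j ∈ Finset.range n, (F1 j + F2 j) = 2 ^ n - 1 := by
      rw [← two_pow_sum n]
      apply Finset.sum_congr rfl
      intro j hj
      have hj' := Finset.mem_range.mp hj
      rw [hF1A j hj', hF2S j hj']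
      omega
    have e2 : ∑ j ∈ Finset.range n, (F1 (n + j) + F2 (n + j)) = 2 ^ n - 1 := by
      rw [← two_pow_sum n]
      apply Finset.sum_congr rfl
      intro j hj
      have hj' := Finset.mem_range.mp hj
      rw [hF1N (n + j) (by omega), hF2B j hj']
      omega
    rw [e1, e2]
    omega
  -- every point of Y has coordinate sum ≥ 2^n - 1
  have hlow : ∀ y ∈ Y, 2 ^ n - 1 ≤ y.1 + y.2 := by
    rintro y ⟨γ, hγ1, hγB, rfl⟩
    dsimp only
    have hsplit : ∑ i ∈ Finset.univ.filter (fun i : Fin N => γ i = 0), (F1 i.val + F2 i.val)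
        = (∑ i ∈ Finset.univ.filter (fun i : Fin N => γ i = 0), F1 i.val)
          + ∑ i ∈ Finset.univ.filter (fun i : Fin N => γ i = 0), F2 i.val :=
      Finset.sum_add_distrib
    have hub : ∑ i : Fin N, (F1 i.val + F2 i.val)
        ≤ (∑ i ∈ Finset.univ.filter (fun i : Fin N => γ i = 0), (F1 i.val + F2 i.val))
          + ∑ i : Fin N, (F1 i.val + F2 i.val) * γ i := by
      rw [Finset.sum_filter, ← Finset.sum_add_distrib]
      apply Finset.sum_le_sum
      intro i _
      by_cases h : γ i = 0
      · simp [h]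
      · have h1 : 1 ≤ γ i := Nat.one_le_iff_ne_zero.mpr h
        rw [if_neg h]
        have hm : (F1 i.val + F2 i.val) * 1 ≤ (F1 i.val + F2 i.val) * γ i :=
          Nat.mul_le_mul le_rfl h1
        omega
    have hB : (∑ i : Fin N, (F1 i.val + F2 i.val) * γ i) ≤ 2 ^ n - 1 := hγB
    have hp := one_le_two_pow n
    omega
  -- Y is finite
  have hbound : ∀ y ∈ Y, y.1 ≤ 2 * (2 ^ n - 1) ∧ y.2 ≤ 2 * (2 ^ n - 1) := by
    rintro y ⟨γ, hγ1, hγB, rfl⟩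
    dsimp only
    constructor
    · calc ∑ i ∈ Finset.univ.filter (fun i : Fin N => γ i = 0), F1 i.val
          ≤ ∑ i : Fin N, F1 i.val := Finset.sum_le_sum_of_subset (Finset.filter_subset _ _)
      _ ≤ ∑ i : Fin N, (F1 i.val + F2 i.val) := Finset.sum_le_sum (fun i _ => by omega)
      _ = 2 * (2 ^ n - 1) := htotal
    · calc ∑ i ∈ Finset.univ.filter (fun i : Fin N => γ i = 0), F2 i.val
          ≤ ∑ i : Fin N, F2 i.val := Finset.sum_le_sum_of_subset (Finset.filter_subset _ _)
      _ ≤ ∑ i : Fin N, (F1 i.val + F2 i.val) := Finset.sum_le_sum (fun i _ => by omega)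
      _ = 2 * (2 ^ n - 1) := htotal
  have hYfin : Y.Finite := by
    apply Set.Finite.subset ((Set.finite_Iic (2 * (2 ^ n - 1))).prod
      (Set.finite_Iic (2 * (2 ^ n - 1))))
    intro y hy
    exact ⟨(hbound y hy).1, (hbound y hy).2⟩
  -- the exponential family of points
  have hmem : ∀ a : ℕ, a < 2 ^ n → (2 ^ n - 1 - a, a) ∈ Y := by
    intro a ha
    set g : ℕ → ℕ := fun j =>
      if j < n then (if a.testBit j then 1 else 0)
      else if j < 2 * n then (if a.testBit (j - n) then 0 else 1) else 0 with hg
    have hgA : ∀ j, j < n → g j = (if a.testBit j then 1 else 0) := by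
      intro j hj; simp only [hg]; rw [if_pos hj]
    have hgB : ∀ j, j < n → g (n + j) = (if a.testBit j then 0 else 1) := by
      intro j hj; simp only [hg]
      rw [if_neg (show ¬ n + j < n by omega), if_pos (show n + j < 2 * n by omega)]
      have hx : n + j - n = j := by omega
      rw [hx]
    have hgN : ∀ j, 2 * n ≤ j → g j = 0 := by
      intro j hj; simp only [hg]
      rw [if_neg (show ¬ j < n by omega), if_neg (show ¬ j < 2 * n by omega)]
    refine ⟨fun i => g i.val, ?_, ?_, ?_⟩
    · intro i
      simp only [hg]
      split_ifs <;> omega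
    · -- cost = 2^n - 1
      show (∑ i : Fin N, (F1 i.val + F2 i.val) * g i.val) ≤ 2 ^ n - 1
      have hc : (∑ i : Fin N, (F1 i.val + F2 i.val) * g i.val) = 2 ^ n - 1 := by
        rw [Fin.sum_univ_eq_sum_range (fun j => (F1 j + F2 j) * g j) N]
        rw [split_sum h2n _ (by
          intro j hj
          rw [hgN j hj, Nat.mul_zero])]
        have e1 : ∀ j ∈ Finset.range n,
            (F1 j + F2 j) * g j = (if a.testBit j then 2 ^ j else 0) := by
          intro j hj
          have hj' := Finset.mem_range.mp hj
          rw [hF1A j hj', hF2S j hj', hgA j hj']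
          by_cases h : a.testBit j <;> simp [h]
        have e2 : ∀ j ∈ Finset.range n,
            (F1 (n + j) + F2 (n + j)) * g (n + j)
              = (if a.testBit j then 0 else 2 ^ j) := by
          intro j hj
          have hj' := Finset.mem_range.mp hj
          rw [hF1N (n + j) (by omega), hF2B j hj', hgB j hj']
          by_cases h : a.testBit j <;> simp [h]
        rw [Finset.sum_congr rfl e1, Finset.sum_congr rfl e2, ← Finset.sum_add_distrib]
        rw [← two_pow_sum n]
        apply Finset.sum_congr rfl
        intro j hj
        by_cases h : a.testBit j <;> simp [h]
      omega
    · -- value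
      have hfil : ∀ (F : ℕ → ℕ),
          ∑ i ∈ Finset.univ.filter (fun i : Fin N => g i.val = 0), F i.val
            = ∑ j ∈ Finset.range N, (if g j = 0 then F j else 0) := by
        intro F
        rw [← Fin.sum_univ_eq_sum_range (fun j => if g j = 0 then F j else 0) N]
        simp only [Finset.sum_filter]
      have hv1 : ∑ i ∈ Finset.univ.filter (fun i : Fin N => g i.val = 0), F1 i.val
          = 2 ^ n - 1 - a := by
        rw [hfil F1]
        rw [split_sum h2n _ (by
          intro j hj
          rw [hF1N j (by omega)]
          simp)]
        have e2 : ∀ j ∈ Finset.range n, (if g (n + j) = 0 then F1 (n + j) else 0) = 0 := by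
          intro j hj
          rw [hF1N (n + j) (by omega)]
          simp
        rw [Finset.sum_congr rfl e2, Finset.sum_const_zero]
        have e1 : ∀ j ∈ Finset.range n,
            (if g j = 0 then F1 j else 0) = (if a.testBit j then 0 else 2 ^ j) := by
          intro j hj
          have hj' := Finset.mem_range.mp hj
          rw [hgA j hj', hF1A j hj']
          by_cases h : a.testBit j <;> simp [h]
        rw [Finset.sum_congr rfl e1]
        have hb := bitsum n a ha
        have hsum : (∑ j ∈ Finset.range n, (if a.testBit j then (0:ℕ) else 2 ^ j))
            + (∑ j ∈ Finset.range n, (if a.testBit j then 2 ^ j else 0))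
            = 2 ^ n - 1 := by
          rw [← Finset.sum_add_distrib, ← two_pow_sum n]
          apply Finset.sum_congr rfl
          intro j hj
          by_cases h : a.testBit j <;> simp [h]
        omega
      have hv2 : ∑ i ∈ Finset.univ.filter (fun i : Fin N => g i.val = 0), F2 i.val = a := by
        rw [hfil F2]
        rw [split_sum h2n _ (by
          intro j hj
          rw [hF2N j hj]
          simp)]
        have e1 : ∀ j ∈ Finset.range n, (if g j = 0 then F2 j else 0) = 0 := by
          intro j hj
          have hj' := Finset.mem_range.mp hj
          rw [hF2S j hj']
          simp
        rw [Finset.sum_congr rfl e1, Finset.sum_const_zero]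
        have e2 : ∀ j ∈ Finset.range n,
            (if g (n + j) = 0 then F2 (n + j) else 0)
              = (if a.testBit j then 2 ^ j else 0) := by
          intro j hj
          have hj' := Finset.mem_range.mp hj
          rw [hgB j hj', hF2B j hj']
          by_cases h : a.testBit j <;> simp [h]
        rw [Finset.sum_congr rfl e2, bitsum n a ha]
        omega
      show ((2:ℕ) ^ n - 1 - a, a)
          = (∑ i ∈ Finset.univ.filter (fun i : Fin N => g i.val = 0), F1 i.val,
             ∑ i ∈ Finset.univ.filter (fun i : Fin N => g i.val = 0), F2 i.val)
      rw [hv1, hv2]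
  -- all those points are nondominated
  have hndom : ∀ a : ℕ, a < 2 ^ n → (2 ^ n - 1 - a, a) ∈ NDmin Y := by
    intro a ha
    refine ⟨hmem a ha, ?_⟩
    rintro ⟨y', hy', hle, hne⟩
    have hl := hlow y' hy'
    rw [Prod.le_def] at hle
    apply hne
    have hc : y'.1 = 2 ^ n - 1 - a ∧ y'.2 = a := by
      simp only at hle
      omega
    exact Prod.ext hc.1 hc.2
  -- counting
  set P : Finset (ℕ × ℕ) := (Finset.range (2 ^ n)).image (fun a => (2 ^ n - 1 - a, a))
    with hP
  have hPcard : P.card = 2 ^ n := by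
    rw [hP, Finset.card_image_of_injective _
      (fun a b hab => ((Prod.mk.injEq _ _ _ _).mp hab).2), Finset.card_range]
  have hPsub : (↑P : Set (ℕ × ℕ)) ⊆ NDmin Y := by
    intro y hy
    simp only [hP, Finset.coe_image, Set.mem_image, Finset.mem_coe, Finset.mem_range] at hy
    rcases hy with ⟨a, ha, rfl⟩
    exact hndom a ha
  have hNDfin : (NDmin Y).Finite := hYfin.subset (fun y hy => hy.1)
  have hle := Set.ncard_le_ncard hPsub hNDfin
  rw [Set.ncard_coe_finset, hPcard] at hle
  omega
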